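/- Let V be an oriented n-dimensional real vector space with nondegenerate symmetric bilinear form g. For every vector v ∈ V and every p-form α ∈ Λ^pV*: i_v(★α) = ★(α ∧ v♭). -/

import Mathlib

noncomputable section

/-- The wedge product of a raw `p`-linear candidate `α` and a raw `q`-linear candidate `β`,
with the convention `(α∧β)(v₁,…,v_{p+q}) = (1/(p!q!)) Σ_σ sign(σ) α(v_{σ(1)},…) β(…)`. -/
def wedgeRaw {V : Type*} [AddCommGroup V] [Module ℝ V] {p q : ℕ}
    (α : (Fin p → V) → ℝ) (β : (Fin q → V) → ℝ) : (Fin (p + q) → V) → ℝ :=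
  fun w => ((p.factorial * q.factorial : ℕ) : ℝ)⁻¹ *
    ∑ σ : Equiv.Perm (Fin (p + q)), ((Equiv.Perm.sign σ : ℤ) : ℝ) *
      α (fun i => w (σ (Fin.castAdd q i))) * β (fun j => w (σ (Fin.natAdd p j)))

/-- The `1/q!`-normalised inner product of two raw `q`-linear candidates induced by an
orthonormal basis `e` with signature signs `s` (`g(e i, e j) = s i δ_{ij}`, `s i = ±1`):
`⟨α,β⟩_norm = (1/q!) α_{a₁…a_q} β^{a₁…a_q}`. -/
def innerNormRaw {V : Type*} [AddCommGroup V] [Module ℝ V] {n q : ℕ}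
    (e : Module.Basis (Fin n) ℝ V) (s : Fin n → ℝ)
    (α β : (Fin q → V) → ℝ) : ℝ :=
  ((q.factorial : ℕ) : ℝ)⁻¹ *
    ∑ f : Fin q → Fin n, (∏ i, s (f i)) * α (fun i => e (f i)) * β (fun i => e (f i))

namespace HodgeAux

variable {V : Type*} [AddCommGroup V] [Module ℝ V]

lemma psign_mul_self {n : ℕ} (ρ : Equiv.Perm (Fin n)) :
    ((Equiv.Perm.sign ρ : ℤ) : ℝ) * ((Equiv.Perm.sign ρ : ℤ) : ℝ) = 1 := by
  rcases Int.units_eq_one_or (Equiv.Perm.sign ρ) with h | h <;> simp [h]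

lemma psign_mul {n : ℕ} (σ τ : Equiv.Perm (Fin n)) :
    ((Equiv.Perm.sign (σ * τ) : ℤ) : ℝ)
      = ((Equiv.Perm.sign σ : ℤ) : ℝ) * ((Equiv.Perm.sign τ : ℤ) : ℝ) := by
  rw [Equiv.Perm.sign_mul]; push_cast; ring

lemma sum_perm_mulLeft {n : ℕ} (ρ : Equiv.Perm (Fin n)) (F : Equiv.Perm (Fin n) → ℝ) :
    ∑ σ : Equiv.Perm (Fin n), ((Equiv.Perm.sign σ : ℤ) : ℝ) * F (ρ * σ)
      = ((Equiv.Perm.sign ρ : ℤ) : ℝ)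
          * ∑ σ : Equiv.Perm (Fin n), ((Equiv.Perm.sign σ : ℤ) : ℝ) * F σ := by
  rw [Finset.mul_sum]
  apply Fintype.sum_equiv (Equiv.mulLeft ρ)
  intro σ
  have h1 : Equiv.mulLeft ρ σ = ρ * σ := rfl
  rw [h1, psign_mul]
  have h2 := psign_mul_self ρ
  linear_combination (-((Equiv.Perm.sign σ : ℤ) : ℝ) * F (ρ * σ)) * h2

lemma wedgeRaw_comp_perm {a b : ℕ}
    (α : (Fin a → V) → ℝ) (β : (Fin b → V) → ℝ) (u : Fin (a + b) → V)
    (ρ : Equiv.Perm (Fin (a + b))) :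
    wedgeRaw α β (u ∘ ρ) = ((Equiv.Perm.sign ρ : ℤ) : ℝ) * wedgeRaw α β u := by
  unfold wedgeRaw
  have key := sum_perm_mulLeft ρ
    (fun t => α (fun i => u (t (Fin.castAdd b i))) * β (fun j => u (t (Fin.natAdd a j))))
  have h1 : ∑ σ : Equiv.Perm (Fin (a + b)), ((Equiv.Perm.sign σ : ℤ) : ℝ) *
        α (fun i => (u ∘ ρ) (σ (Fin.castAdd b i))) * β (fun j => (u ∘ ρ) (σ (Fin.natAdd a j)))
      = ∑ σ : Equiv.Perm (Fin (a + b)), ((Equiv.Perm.sign σ : ℤ) : ℝ) *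
        ((fun t => α (fun i => u (t (Fin.castAdd b i))) *
          β (fun j => u (t (Fin.natAdd a j)))) (ρ * σ)) := by
    apply Finset.sum_congr rfl
    intro σ _
    rw [mul_assoc]
    rfl
  rw [h1, key]
  ring

/-- The elementary `k`-form `e^{a 0} ∧ … ∧ e^{a (k-1)}`. -/
def gammaA {k m : ℕ} (e : Module.Basis (Fin m) ℝ V) (a : Fin k → Fin m) :
    AlternatingMap ℝ V ℝ (Fin k) :=
  (Pi.basisFun ℝ (Fin k)).det.compLinearMap (LinearMap.pi fun i => e.coord (a i))

lemma gammaA_apply_basis {k m : ℕ} (e : Module.Basis (Fin m) ℝ V) (a : Fin k → Fin m)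
    (f : Fin k → Fin m) :
    gammaA e a (fun j => e (f j))
      = Matrix.det (Matrix.of fun i j : Fin k => if f j = a i then (1 : ℝ) else 0) := by
  rw [gammaA, AlternatingMap.compLinearMap_apply, Module.Basis.det_apply]
  congr 1
  ext i j
  simp [Module.Basis.toMatrix_apply, LinearMap.pi_apply, Module.Basis.coord_apply, Module.Basis.repr_self_apply,
    Finsupp.single_apply]

lemma gammaA_eq_zero_of_not_injective {k m : ℕ} (e : Module.Basis (Fin m) ℝ V)
    (a : Fin k → Fin m) (f : Fin k → Fin m) (hf : ¬ Function.Injective f) :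
    gammaA e a (fun j => e (f j)) = 0 := by
  rw [Function.not_injective_iff] at hf
  obtain ⟨x, y, hxy, hne⟩ := hf
  rw [gammaA_apply_basis]
  apply Matrix.det_zero_of_column_eq hne
  intro i
  simp [hxy]

lemma gammaA_eq_zero_of_miss {k m : ℕ} (e : Module.Basis (Fin m) ℝ V)
    (a : Fin k → Fin m) (f : Fin k → Fin m) (j0 : Fin k) (h : ∀ i, a i ≠ f j0) :
    gammaA e a (fun j => e (f j)) = 0 := by
  rw [gammaA_apply_basis]
  apply Matrix.det_eq_zero_of_column_eq_zero j0
  intro i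
  simp [Matrix.of_apply, (h i).symm]

lemma gammaA_perm {k m : ℕ} (e : Module.Basis (Fin m) ℝ V) (a : Fin k → Fin m)
    (ha : Function.Injective a) (ρ : Equiv.Perm (Fin k)) :
    gammaA e a (fun j => e (a (ρ j))) = ((Equiv.Perm.sign ρ : ℤ) : ℝ) := by
  rw [gammaA_apply_basis]
  have key : (Matrix.of fun i j : Fin k => if a (ρ j) = a i then (1 : ℝ) else 0)
      = Equiv.Perm.permMatrix ℝ ρ⁻¹ := by
    ext i j
    have hiff : a (ρ j) = a i ↔ ρ⁻¹ i = j := by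
      constructor
      · intro h; have := ha h; rw [← this]; simp
      · intro h; rw [← h]; simp
    by_cases h : ρ⁻¹ i = j
    · simp [Matrix.of_apply, hiff.mpr h, Equiv.Perm.permMatrix, PEquiv.toMatrix_apply,
        Equiv.toPEquiv_apply, h]
    · have h2 : ¬ a (ρ j) = a i := fun hc => h (hiff.mp hc)
      simp [Matrix.of_apply, h2, Equiv.Perm.permMatrix, PEquiv.toMatrix_apply,
        Equiv.toPEquiv_apply, h]
      exact h
  rw [key, Matrix.det_permutation]
  simp

lemma wedge_gammaA_eval {k l m : ℕ} (e : Module.Basis (Fin m) ℝ V)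
    (a : Fin k → Fin m) (b : Fin l → Fin m) (ha : Function.Injective a)
    (hab : ∀ i j, a i ≠ b j)
    (μ : (Fin l → V) → ℝ)
    (hμ : ∀ (u : Fin l → V) (θ : Equiv.Perm (Fin l)),
      μ (u ∘ θ) = ((Equiv.Perm.sign θ : ℤ) : ℝ) * μ u) :
    wedgeRaw (⇑(gammaA e a)) μ
        (fun i => e (Fin.addCases (motive := fun _ => Fin m) a b i))
      = μ (fun j => e (b j)) := by
  unfold wedgeRaw
  set u : Fin (k + l) → V :=
    fun i => e (Fin.addCases (motive := fun _ => Fin m) a b i) with hu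
  set Φ : Equiv.Perm (Fin k) × Equiv.Perm (Fin l) → Equiv.Perm (Fin (k + l)) :=
    fun ρθ => finSumFinEquiv.permCongr (Equiv.sumCongr ρθ.1 ρθ.2) with hΦ
  have hΦcast : ∀ ρθ (i : Fin k), Φ ρθ (Fin.castAdd l i) = Fin.castAdd l (ρθ.1 i) := by
    intro ρθ i
    simp [hΦ, Equiv.permCongr_apply, finSumFinEquiv_symm_apply_castAdd]
  have hΦnat : ∀ ρθ (j : Fin l), Φ ρθ (Fin.natAdd k j) = Fin.natAdd k (ρθ.2 j) := by
    intro ρθ j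
    simp [hΦ, Equiv.permCongr_apply, finSumFinEquiv_symm_apply_natAdd]
  have hΦinj : Function.Injective Φ := by
    intro x y hxy
    have h1 : ∀ i : Fin k, x.1 i = y.1 i := by
      intro i
      have := (hΦcast x i).symm.trans ((congrArg (fun σ => σ (Fin.castAdd l i)) hxy).trans
        (hΦcast y i))
      exact Fin.ext (by simpa using congrArg Fin.val this)
    have h2 : ∀ j : Fin l, x.2 j = y.2 j := by
      intro j
      have := (hΦnat x j).symm.trans ((congrArg (fun σ => σ (Fin.natAdd k j)) hxy).trans
        (hΦnat y j))
      exact Fin.ext (by simpa using congrArg Fin.val this)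
    exact Prod.ext (Equiv.ext h1) (Equiv.ext h2)
  have hzero : ∀ σ : Equiv.Perm (Fin (k + l)), σ ∉ Finset.image Φ Finset.univ →
      ((Equiv.Perm.sign σ : ℤ) : ℝ) * gammaA e a (fun i => u (σ (Fin.castAdd l i)))
        * μ (fun j => u (σ (Fin.natAdd k j))) = 0 := by
    intro σ hσ
    by_cases hblock : ∀ i : Fin k, (σ (Fin.castAdd l i) : ℕ) < k
    · exfalso
      apply hσ
      have hρ0inj : Function.Injective
          (fun i : Fin k => (⟨(σ (Fin.castAdd l i) : ℕ), hblock i⟩ : Fin k)) := by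
        intro x y hxy
        have h1 : σ (Fin.castAdd l x) = σ (Fin.castAdd l y) :=
          Fin.ext (by simpa using congrArg Fin.val hxy)
        have h2 := σ.injective h1
        exact Fin.ext (by simpa using congrArg Fin.val h2)
      have hρ0bij := (Finite.injective_iff_bijective).mp hρ0inj
      set ρ : Equiv.Perm (Fin k) := Equiv.ofBijective _ hρ0bij with hρ
      have hge : ∀ j : Fin l, k ≤ (σ (Fin.natAdd k j) : ℕ) := by
        intro j
        by_contra hlt
        push_neg at hlt
        obtain ⟨i, hi⟩ := hρ0bij.2 ⟨(σ (Fin.natAdd k j) : ℕ), hlt⟩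
        have h1 : (σ (Fin.castAdd l i) : ℕ) = (σ (Fin.natAdd k j) : ℕ) := by
          have := congrArg Fin.val hi
          simpa using this
        have h2 : Fin.castAdd l i = Fin.natAdd k j := σ.injective (Fin.ext h1)
        have h3 := congrArg Fin.val h2
        simp only [Fin.coe_castAdd, Fin.coe_natAdd] at h3
        have := i.isLt
        omega
      have hθ0inj : Function.Injective (fun j : Fin l =>
          (⟨(σ (Fin.natAdd k j) : ℕ) - k, by
            have := (σ (Fin.natAdd k j)).isLt; have := hge j; omega⟩ : Fin l)) := by
        intro x y hxy
        have hx := hge x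
        have hy := hge y
        have h1 : (σ (Fin.natAdd k x) : ℕ) - k = (σ (Fin.natAdd k y) : ℕ) - k := by
          simpa using congrArg Fin.val hxy
        have h2 : σ (Fin.natAdd k x) = σ (Fin.natAdd k y) := Fin.ext (by omega)
        have h3 := σ.injective h2
        exact Fin.ext (by simpa using congrArg Fin.val h3)
      have hθ0bij := (Finite.injective_iff_bijective).mp hθ0inj
      set θ : Equiv.Perm (Fin l) := Equiv.ofBijective _ hθ0bij with hθ
      refine Finset.mem_image.mpr ⟨(ρ, θ), Finset.mem_univ _, ?_⟩
      apply Equiv.ext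
      intro x
      induction x using Fin.addCases with
      | left i =>
          rw [hΦcast]
          exact Fin.ext (by simp [hρ, Equiv.ofBijective_apply])
      | right j =>
          rw [hΦnat]
          refine Fin.ext ?_
          simp only [Fin.coe_natAdd, hθ, Equiv.ofBijective_apply]
          have := hge j
          omega
    · push_neg at hblock
      obtain ⟨i0, hi0⟩ := hblock
      have hub := (σ (Fin.castAdd l i0)).isLt
      set j0 : Fin l := ⟨(σ (Fin.castAdd l i0) : ℕ) - k, by omega⟩ with hj0
      have harg : u (σ (Fin.castAdd l i0)) = e (b j0) := by
        have hx : σ (Fin.castAdd l i0) = Fin.natAdd k j0 := by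
          refine Fin.ext ?_
          simp only [Fin.coe_natAdd, hj0]
          omega
        rw [hu, hx]
        simp [Fin.addCases_right]
      have : gammaA e a (fun i => u (σ (Fin.castAdd l i))) = 0 := by
        have hform : (fun i => u (σ (Fin.castAdd l i)))
            = fun i => e ((fun i => Fin.addCases (motive := fun _ => Fin m) a b
                (σ (Fin.castAdd l i))) i) := rfl
        rw [hform]
        apply gammaA_eq_zero_of_miss e a _ i0
        intro i
        have : Fin.addCases (motive := fun _ => Fin m) a b (σ (Fin.castAdd l i0)) = b j0 := by
          have hx : σ (Fin.castAdd l i0) = Fin.natAdd k j0 := by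
            refine Fin.ext ?_
            simp only [Fin.coe_natAdd, hj0]
            omega
          rw [hx, Fin.addCases_right]
        rw [this]
        exact hab i j0
      rw [this]
      ring
  rw [← Finset.sum_subset (Finset.subset_univ (Finset.image Φ Finset.univ))
    (fun x _ hx => hzero x hx)]
  rw [Finset.sum_image (fun x _ y _ hxy => hΦinj hxy)]
  have hterm : ∀ ρθ : Equiv.Perm (Fin k) × Equiv.Perm (Fin l),
      ((Equiv.Perm.sign (Φ ρθ) : ℤ) : ℝ)
        * gammaA e a (fun i => u (Φ ρθ (Fin.castAdd l i)))
        * μ (fun j => u (Φ ρθ (Fin.natAdd k j))) = μ (fun j => e (b j)) := by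
    rintro ⟨ρ, θ⟩
    have hsign : ((Equiv.Perm.sign (Φ (ρ, θ)) : ℤ) : ℝ)
        = ((Equiv.Perm.sign ρ : ℤ) : ℝ) * ((Equiv.Perm.sign θ : ℤ) : ℝ) := by
      rw [hΦ]
      simp only [Equiv.Perm.sign_permCongr, Equiv.Perm.sign_sumCongr]
      push_cast
      ring
    have hargγ : (fun i => u (Φ (ρ, θ) (Fin.castAdd l i))) = fun i => e (a (ρ i)) := by
      funext i
      rw [hΦcast]
      simp [hu, Fin.addCases_left]
    have hargμ : (fun j => u (Φ (ρ, θ) (Fin.natAdd k j))) = (fun j => e (b j)) ∘ θ := by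
      funext j
      rw [hΦnat]
      simp [hu, Fin.addCases_right]
    rw [hargγ, hargμ, gammaA_perm e a ha ρ, hμ, hsign]
    have h1 := psign_mul_self ρ
    have h2 := psign_mul_self θ
    linear_combination (((Equiv.Perm.sign θ : ℤ) : ℝ) * ((Equiv.Perm.sign θ : ℤ) : ℝ)
      * μ (fun j => e (b j))) * h1 + (μ (fun j => e (b j))) * h2
  rw [Finset.sum_congr rfl (fun x _ => hterm x)]
  rw [Finset.sum_const]
  simp only [Finset.card_univ, Fintype.card_prod, Fintype.card_perm, Fintype.card_fin,
    nsmul_eq_mul]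
  rw [← mul_assoc, inv_mul_cancel₀
    (by exact_mod_cast Nat.mul_ne_zero k.factorial_ne_zero l.factorial_ne_zero), one_mul]

lemma innerNorm_gammaA {k m : ℕ} (e : Module.Basis (Fin m) ℝ V) (s : Fin m → ℝ)
    (a : Fin k → Fin m) (ha : Function.Injective a)
    (β : (Fin k → V) → ℝ)
    (hβ : ∀ (u : Fin k → V) (θ : Equiv.Perm (Fin k)),
      β (u ∘ θ) = ((Equiv.Perm.sign θ : ℤ) : ℝ) * β u) :
    innerNormRaw e s (⇑(gammaA e a)) β = (∏ i, s (a i)) * β (fun i => e (a i)) := by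
  unfold innerNormRaw
  set Ψ : Equiv.Perm (Fin k) → (Fin k → Fin m) := fun ρ => a ∘ ρ with hΨ
  have hΨinj : Function.Injective Ψ := by
    intro x y hxy
    apply Equiv.ext
    intro i
    exact ha (congrFun hxy i)
  have hzero : ∀ f : Fin k → Fin m, f ∉ Finset.image Ψ Finset.univ →
      (∏ i, s (f i)) * gammaA e a (fun i => e (f i)) * β (fun i => e (f i)) = 0 := by
    intro f hf
    by_cases hinj : Function.Injective f
    · by_cases hcover : ∀ j, ∃ i, a i = f j
      · exfalso
        apply hf
        choose t ht using hcover
        have htinj : Function.Injective t := by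
          intro x y hxy
          apply hinj
          rw [← ht x, ← ht y, hxy]
        have htbij := (Finite.injective_iff_bijective).mp htinj
        refine Finset.mem_image.mpr ⟨Equiv.ofBijective t htbij, Finset.mem_univ _, ?_⟩
        funext j
        simp [hΨ, Equiv.ofBijective_apply, ht]
      · push_neg at hcover
        obtain ⟨j0, hj0⟩ := hcover
        rw [gammaA_eq_zero_of_miss e a f j0 hj0]
        ring
    · rw [gammaA_eq_zero_of_not_injective e a f hinj]
      ring
  rw [← Finset.sum_subset (Finset.subset_univ (Finset.image Ψ Finset.univ))
    (fun x _ hx => hzero x hx)]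
  rw [Finset.sum_image (fun x _ y _ hxy => hΨinj hxy)]
  have hterm : ∀ ρ : Equiv.Perm (Fin k),
      (∏ i, s (Ψ ρ i)) * gammaA e a (fun i => e (Ψ ρ i)) * β (fun i => e (Ψ ρ i))
        = (∏ i, s (a i)) * β (fun i => e (a i)) := by
    intro ρ
    have hprod : (∏ i, s (Ψ ρ i)) = ∏ i, s (a i) := by
      rw [hΨ]
      exact Equiv.prod_comp ρ (fun i => s (a i))
    have hform : (fun i => e (Ψ ρ i)) = (fun i => e (a i)) ∘ ρ := rfl
    have hγ : gammaA e a (fun i => e (Ψ ρ i)) = ((Equiv.Perm.sign ρ : ℤ) : ℝ) :=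
      gammaA_perm e a ha ρ
    rw [hprod, hγ, hform, hβ]
    have h1 := psign_mul_self ρ
    linear_combination ((∏ i, s (a i)) * β (fun i => e (a i))) * h1
  rw [Finset.sum_congr rfl (fun x _ => hterm x)]
  rw [Finset.sum_const]
  simp only [Finset.card_univ, Fintype.card_perm, Fintype.card_fin, nsmul_eq_mul]
  rw [← mul_assoc, inv_mul_cancel₀ (by exact_mod_cast k.factorial_ne_zero), one_mul]

/-- The cycle `(j, j+1, …, p)` of `Fin (p+1)`, sending `castSucc i ↦ j.succAbove i` and
`last ↦ j`. -/
def cyc {p : ℕ} (j : Fin (p + 1)) : Equiv.Perm (Fin (p + 1)) :=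
  Equiv.ofBijective
    (fun x => Fin.lastCases (motive := fun _ => Fin (p + 1)) j (fun i => j.succAbove i) x)
    (by
      rw [← Finite.injective_iff_bijective]
      intro x y hxy
      induction x using Fin.lastCases with
      | last =>
          induction y using Fin.lastCases with
          | last => rfl
          | cast i =>
              simp only [Fin.lastCases_last, Fin.lastCases_castSucc] at hxy
              exact absurd hxy.symm (Fin.succAbove_ne j i)
      | cast i =>
          induction y using Fin.lastCases with
          | last =>
              simp only [Fin.lastCases_last, Fin.lastCases_castSucc] at hxy
              exact absurd hxy (Fin.succAbove_ne j i)
          | cast i' =>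
              simp only [Fin.lastCases_castSucc] at hxy
              rw [Fin.succAbove_right_injective hxy])

lemma cyc_last {p : ℕ} (j : Fin (p + 1)) : cyc j (Fin.last p) = j := by
  simp [cyc, Equiv.ofBijective_apply]

lemma cyc_castSucc {p : ℕ} (j : Fin (p + 1)) (i : Fin p) :
    cyc j (Fin.castSucc i) = j.succAbove i := by
  simp [cyc, Equiv.ofBijective_apply]

lemma cyc_castAdd {p : ℕ} (j : Fin (p + 1)) (i : Fin p) :
    cyc j (Fin.castAdd 1 i) = j.succAbove i := by
  have : Fin.castAdd 1 i = Fin.castSucc i := rfl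
  rw [this, cyc_castSucc]

lemma natAdd_zero_eq_last (p : ℕ) : Fin.natAdd p (0 : Fin 1) = Fin.last p := by
  apply Fin.ext
  simp

lemma wedgeRaw_one_form {p : ℕ} (α : AlternatingMap ℝ V ℝ (Fin p))
    (β1 : (Fin 1 → V) → ℝ) (u : Fin (p + 1) → V) :
    wedgeRaw (⇑α) β1 u
      = ∑ j : Fin (p + 1), ((Equiv.Perm.sign (cyc j) : ℤ) : ℝ)
          * α (fun i => u (j.succAbove i)) * β1 (fun _ => u j) := by
  unfold wedgeRaw
  set ext1 : Equiv.Perm (Fin p) → Equiv.Perm (Fin (p + 1)) :=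
    fun ρ => finSumFinEquiv.permCongr (Equiv.sumCongr ρ (Equiv.refl (Fin 1))) with hext
  have hextcast : ∀ (ρ : Equiv.Perm (Fin p)) (i : Fin p),
      ext1 ρ (Fin.castAdd 1 i) = Fin.castAdd 1 (ρ i) := by
    intro ρ i
    simp [hext, Equiv.permCongr_apply, finSumFinEquiv_symm_apply_castAdd]
  have hextnat : ∀ (ρ : Equiv.Perm (Fin p)) (i1 : Fin 1),
      ext1 ρ (Fin.natAdd p i1) = Fin.natAdd p i1 := by
    intro ρ i1
    simp [hext, Equiv.permCongr_apply, finSumFinEquiv_symm_apply_natAdd]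
  set Φ : Fin (p + 1) × Equiv.Perm (Fin p) → Equiv.Perm (Fin (p + 1)) :=
    fun jρ => cyc jρ.1 * ext1 jρ.2 with hΦ
  have hΦnat : ∀ jρ : Fin (p + 1) × Equiv.Perm (Fin p),
      Φ jρ (Fin.natAdd p (0 : Fin 1)) = jρ.1 := by
    intro jρ
    rw [hΦ]
    simp only [Equiv.Perm.mul_apply]
    rw [hextnat, natAdd_zero_eq_last, cyc_last]
  have hΦcast : ∀ (jρ : Fin (p + 1) × Equiv.Perm (Fin p)) (i : Fin p),
      Φ jρ (Fin.castAdd 1 i) = jρ.1.succAbove (jρ.2 i) := by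
    intro jρ i
    rw [hΦ]
    simp only [Equiv.Perm.mul_apply]
    rw [hextcast, cyc_castAdd]
  have hΦinj : Function.Injective Φ := by
    intro x y hxy
    have h1 : x.1 = y.1 := by
      rw [← hΦnat x, ← hΦnat y, hxy]
    have h2 : x.2 = y.2 := by
      apply Equiv.ext
      intro i
      have := (hΦcast x i).symm.trans ((congrArg (fun σ => σ (Fin.castAdd 1 i)) hxy).trans
        (hΦcast y i))
      rw [h1] at this
      exact Fin.succAbove_right_injective this
    exact Prod.ext h1 h2
  have hΦbij : Function.Bijective Φ := by
    rw [Fintype.bijective_iff_injective_and_card]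
    refine ⟨hΦinj, ?_⟩
    simp [Fintype.card_prod, Fintype.card_perm, Fintype.card_fin, Nat.factorial_succ]
  rw [← Fintype.sum_bijective Φ hΦbij _ _ (fun jρ => rfl)]
  have hterm : ∀ jρ : Fin (p + 1) × Equiv.Perm (Fin p),
      ((Equiv.Perm.sign (Φ jρ) : ℤ) : ℝ) * α (fun i => u (Φ jρ (Fin.castAdd 1 i)))
          * β1 (fun j1 => u (Φ jρ (Fin.natAdd p j1)))
        = ((Equiv.Perm.sign (cyc jρ.1) : ℤ) : ℝ) * ((Equiv.Perm.sign jρ.2 : ℤ) : ℝ)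
            * (((Equiv.Perm.sign jρ.2 : ℤ) : ℝ)
                * α (fun i => u (jρ.1.succAbove i))) * β1 (fun _ => u jρ.1) := by
    rintro ⟨j, ρ⟩
    have hsign : ((Equiv.Perm.sign (Φ (j, ρ)) : ℤ) : ℝ)
        = ((Equiv.Perm.sign (cyc j) : ℤ) : ℝ) * ((Equiv.Perm.sign ρ : ℤ) : ℝ) := by
      rw [hΦ]
      simp only [Equiv.Perm.sign_mul]
      have : Equiv.Perm.sign (ext1 ρ) = Equiv.Perm.sign ρ := by
        rw [hext]
        simp [Equiv.Perm.sign_permCongr, Equiv.Perm.sign_sumCongr]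
      rw [this]
      push_cast
      ring
    have hargα : (fun i => u (Φ (j, ρ) (Fin.castAdd 1 i)))
        = (fun i => u (j.succAbove i)) ∘ ρ := by
      funext i
      rw [hΦcast]
      rfl
    have hargβ : (fun j1 : Fin 1 => u (Φ (j, ρ) (Fin.natAdd p j1))) = fun _ => u j := by
      funext j1
      have : j1 = 0 := Subsingleton.elim _ _
      rw [this, hΦnat]
    rw [hsign, hargα, hargβ]
    have halt : α ((fun i => u (j.succAbove i)) ∘ ρ)
        = ((Equiv.Perm.sign ρ : ℤ) : ℝ) * α (fun i => u (j.succAbove i)) := by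
      rw [AlternatingMap.map_perm]
      simp [Units.smul_def, zsmul_eq_mul]
    rw [halt]
  rw [Finset.sum_congr rfl (fun x _ => hterm x)]
  rw [Fintype.sum_prod_type]
  have hinner : ∀ j : Fin (p + 1),
      ∑ ρ : Equiv.Perm (Fin p),
        ((Equiv.Perm.sign (cyc j) : ℤ) : ℝ) * ((Equiv.Perm.sign ρ : ℤ) : ℝ)
          * (((Equiv.Perm.sign ρ : ℤ) : ℝ) * α (fun i => u (j.succAbove i)))
          * β1 (fun _ => u j)
      = (p.factorial : ℝ) * (((Equiv.Perm.sign (cyc j) : ℤ) : ℝ)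
          * α (fun i => u (j.succAbove i)) * β1 (fun _ => u j)) := by
    intro j
    have hc : ∀ ρ : Equiv.Perm (Fin p), ρ ∈ (Finset.univ : Finset (Equiv.Perm (Fin p))) →
        ((Equiv.Perm.sign (cyc j) : ℤ) : ℝ) * ((Equiv.Perm.sign ρ : ℤ) : ℝ)
          * (((Equiv.Perm.sign ρ : ℤ) : ℝ) * α (fun i => u (j.succAbove i)))
          * β1 (fun _ => u j)
        = ((Equiv.Perm.sign (cyc j) : ℤ) : ℝ) * α (fun i => u (j.succAbove i))
            * β1 (fun _ => u j) := by
      intro ρ _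
      have h1 := psign_mul_self ρ
      linear_combination (((Equiv.Perm.sign (cyc j) : ℤ) : ℝ)
        * α (fun i => u (j.succAbove i)) * β1 (fun _ => u j)) * h1
    rw [Finset.sum_congr rfl hc]
    rw [Finset.sum_const]
    simp [Finset.card_univ, Fintype.card_perm, Fintype.card_fin, nsmul_eq_mul]
  rw [Finset.sum_congr rfl (fun j _ => hinner j)]
  rw [← Finset.mul_sum, ← mul_assoc]
  have : ((p.factorial * Nat.factorial 1 : ℕ) : ℝ)⁻¹ * (p.factorial : ℝ) = 1 := by
    rw [Nat.factorial_one, mul_one]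
    exact inv_mul_cancel₀ (by exact_mod_cast p.factorial_ne_zero)
  rw [this, one_mul]

lemma addCases_injective {k l m : ℕ} (a : Fin k → Fin m) (b : Fin l → Fin m)
    (ha : Function.Injective a) (hb : Function.Injective b) (hab : ∀ i j, a i ≠ b j) :
    Function.Injective
      (fun x : Fin (k + l) => Fin.addCases (motive := fun _ => Fin m) a b x) := by
  intro x y h
  induction x using Fin.addCases with
  | left i =>
      induction y using Fin.addCases with
      | left i' =>
          simp only [Fin.addCases_left] at h
          exact congrArg (Fin.castAdd l) (ha h)
      | right j' =>
          simp only [Fin.addCases_left, Fin.addCases_right] at h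
          exact absurd h (hab i j')
  | right j =>
      induction y using Fin.addCases with
      | left i' =>
          simp only [Fin.addCases_left, Fin.addCases_right] at h
          exact absurd h.symm (hab i' j)
      | right j' =>
          simp only [Fin.addCases_right] at h
          exact congrArg (Fin.natAdd k) (hb h)

section SignTransfer

variable {p r : ℕ}

/-- The full arrangement `(a, c)` as an endo-map of `Fin (p+r+1)`. -/
def Dfun (a : Fin (p + 1) → Fin (p + r + 1)) (c : Fin r → Fin (p + r + 1)) :
    Fin (p + r + 1) → Fin (p + r + 1) :=
  fun x => Fin.addCases (motive := fun _ => Fin (p + r + 1)) a c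
    (Fin.cast (by omega) x)

/-- The arrangement `(a ∘ succAbove j, cons (a j) c)`. -/
def Djfun (a : Fin (p + 1) → Fin (p + r + 1)) (c : Fin r → Fin (p + r + 1))
    (j : Fin (p + 1)) : Fin (p + r + 1) → Fin (p + r + 1) :=
  fun x => Fin.addCases (motive := fun _ => Fin (p + r + 1))
    (fun i => a (j.succAbove i)) (Fin.cons (a j) c) x

/-- The block permutation acting by `cyc j` on the first `p+1` slots. -/
def Ejperm (j : Fin (p + 1)) : Equiv.Perm (Fin (p + r + 1)) :=
  (finCongr (Nat.add_right_comm p 1 r : (p + 1) + r = p + r + 1)).permCongr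
    (finSumFinEquiv.permCongr ((cyc j).sumCongr (Equiv.refl (Fin r))))

lemma Dj_eq_comp (a : Fin (p + 1) → Fin (p + r + 1)) (c : Fin r → Fin (p + r + 1))
    (j : Fin (p + 1)) (x : Fin (p + r + 1)) :
    Djfun a c j x = Dfun a c (Ejperm (r := r) j x) := by
  set Pj : Equiv.Perm (Fin ((p + 1) + r)) :=
    finSumFinEquiv.permCongr ((cyc j).sumCongr (Equiv.refl (Fin r))) with hPj
  have hcast : Fin.cast (by omega : p + r + 1 = (p + 1) + r) (Ejperm (r := r) j x)
      = Pj (Fin.cast (by omega : p + r + 1 = (p + 1) + r) x) := by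
    apply Fin.ext
    simp [Ejperm, hPj, finCongr]
  rw [Dfun, hcast]
  have hub := x.isLt
  rcases Nat.lt_trichotomy (x : ℕ) p with hlt | heq | hgt
  · have hx1 : x = Fin.castAdd (r + 1) (⟨(x : ℕ), hlt⟩ : Fin p) := Fin.ext (by simp)
    have hx2 : Fin.cast (by omega : p + r + 1 = (p + 1) + r) x
        = Fin.castAdd r (⟨(x : ℕ), by omega⟩ : Fin (p + 1)) := Fin.ext (by simp)
    have hcyc : cyc j (⟨(x : ℕ), by omega⟩ : Fin (p + 1))
        = j.succAbove (⟨(x : ℕ), hlt⟩ : Fin p) := by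
      have : (⟨(x : ℕ), by omega⟩ : Fin (p + 1))
          = Fin.castSucc (⟨(x : ℕ), hlt⟩ : Fin p) := Fin.ext (by simp)
      rw [this, cyc_castSucc]
    rw [hx2]
    have hPjval : Pj (Fin.castAdd r (⟨(x : ℕ), by omega⟩ : Fin (p + 1)))
        = Fin.castAdd r (j.succAbove (⟨(x : ℕ), hlt⟩ : Fin p)) := by
      rw [hPj]
      simp only [Equiv.permCongr_apply, finSumFinEquiv_symm_apply_castAdd]
      simp [hcyc]
    rw [hPjval, Fin.addCases_left]
    conv_lhs => rw [Djfun, hx1]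
    rw [Fin.addCases_left]
  · have hx1 : x = Fin.natAdd p (0 : Fin (r + 1)) := Fin.ext (by simp [heq.symm])
    have hx2 : Fin.cast (by omega : p + r + 1 = (p + 1) + r) x
        = Fin.castAdd r (Fin.last p) := Fin.ext (by simp [heq])
    rw [hx2]
    have hPjval : Pj (Fin.castAdd r (Fin.last p)) = Fin.castAdd r j := by
      rw [hPj]
      simp only [Equiv.permCongr_apply, finSumFinEquiv_symm_apply_castAdd]
      simp [cyc_last]
    rw [hPjval, Fin.addCases_left]
    conv_lhs => rw [Djfun, hx1]
    rw [Fin.addCases_right, Fin.cons_zero]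
  · have hu : (x : ℕ) - (p + 1) < r := by omega
    have hx1 : x = Fin.natAdd p (⟨(x : ℕ) - p, by omega⟩ : Fin (r + 1)) :=
      Fin.ext (by simp; omega)
    have hx2 : Fin.cast (by omega : p + r + 1 = (p + 1) + r) x
        = Fin.natAdd (p + 1) (⟨(x : ℕ) - (p + 1), hu⟩ : Fin r) := Fin.ext (by simp; omega)
    rw [hx2]
    have hPjval : Pj (Fin.natAdd (p + 1) (⟨(x : ℕ) - (p + 1), hu⟩ : Fin r))
        = Fin.natAdd (p + 1) (⟨(x : ℕ) - (p + 1), hu⟩ : Fin r) := by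
      rw [hPj]
      simp only [Equiv.permCongr_apply, finSumFinEquiv_symm_apply_natAdd]
      simp
    rw [hPjval, Fin.addCases_right]
    conv_lhs => rw [Djfun, hx1]
    rw [Fin.addCases_right]
    have hsucc : (⟨(x : ℕ) - p, by omega⟩ : Fin (r + 1))
        = Fin.succ (⟨(x : ℕ) - (p + 1), hu⟩ : Fin r) := Fin.ext (by simp; omega)
    rw [hsucc, Fin.cons_succ]

lemma sign_Dj (a : Fin (p + 1) → Fin (p + r + 1)) (c : Fin r → Fin (p + r + 1))
    (j : Fin (p + 1)) (hbD : Function.Bijective (Dfun a c))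
    (hbDj : Function.Bijective (Djfun a c j)) :
    ((Equiv.Perm.sign (Equiv.ofBijective _ hbDj) : ℤ) : ℝ)
      = ((Equiv.Perm.sign (cyc j) : ℤ) : ℝ)
          * ((Equiv.Perm.sign (Equiv.ofBijective _ hbD) : ℤ) : ℝ) := by
  have key : Equiv.ofBijective _ hbDj = Equiv.ofBijective _ hbD * Ejperm (r := r) j := by
    apply Equiv.ext
    intro x
    exact Dj_eq_comp a c j x
  rw [key, Equiv.Perm.sign_mul]
  have hEj : Equiv.Perm.sign (Ejperm (r := r) j) = Equiv.Perm.sign (cyc j) := by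
    rw [Ejperm]
    rw [Equiv.Perm.sign_permCongr, Equiv.Perm.sign_permCongr, Equiv.Perm.sign_sumCongr]
    simp
  rw [hEj]
  push_cast
  ring

end SignTransfer

end HodgeAux

open HodgeAux in
/-- In an oriented `n`-dimensional (`n = p + r + 1`) real vector space with
nondegenerate symmetric bilinear form `g` (orthonormal basis `e`, signs `s`, volume form
`ε = det_e`), for every vector `v` and every `p`-form `α`:
`i_v(★α) = ★(α ∧ v♭)`.  Here `★` on `p`-forms is the map `star1` with defining property
`γ ∧ star1 β = ⟨γ,β⟩_norm ε`, and `★(α∧v♭)` is the `r`-form `τ` with defining property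
`γ ∧ τ = ⟨γ, α∧v♭⟩_norm ε` for all `(p+1)`-forms `γ`. -/


theorem insertion_hodge_eq_hodge_wedge_flat
    {V : Type*} [AddCommGroup V] [Module ℝ V] {p r : ℕ}
    (g : V →ₗ[ℝ] V →ₗ[ℝ] ℝ)
    (hsym : ∀ v w, g v w = g w v)
    (e : Module.Basis (Fin (p + r + 1)) ℝ V)
    (s : Fin (p + r + 1) → ℝ) (hs : ∀ i, s i = 1 ∨ s i = -1)
    (horth : ∀ i j, g (e i) (e j) = if i = j then s i else 0)
    (ε : AlternatingMap ℝ V ℝ (Fin (p + r + 1))) (hε : ε = e.det)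
    (star1 : AlternatingMap ℝ V ℝ (Fin p) → AlternatingMap ℝ V ℝ (Fin (r + 1)))
    (hstar1 : ∀ (γ β : AlternatingMap ℝ V ℝ (Fin p)) (w : Fin (p + r + 1) → V),
      wedgeRaw ⇑γ ⇑(star1 β) w = innerNormRaw e s ⇑γ ⇑β * ε w)
    (v : V) (α : AlternatingMap ℝ V ℝ (Fin p))
    (τ : AlternatingMap ℝ V ℝ (Fin r))
    (hτ : ∀ (γ : AlternatingMap ℝ V ℝ (Fin (p + 1))) (w : Fin (p + r + 1) → V),
      wedgeRaw ⇑γ ⇑τ (fun i => w (Fin.cast (by omega) i))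
        = innerNormRaw e s ⇑γ
            (wedgeRaw ⇑α (fun z : Fin 1 → V => g v (z 0))) * ε w) :
    ∀ w : Fin r → V, star1 α (Fin.cons v w) = τ w := by
  classical
  have main : ∀ (c : Fin r → Fin (p + r + 1)), Function.Injective c →
      star1 α (Fin.cons v (fun j => e (c j))) = τ (fun j => e (c j)) := by
    intro c hc
    -- the increasing enumeration of the complement of the range of `c`
    set T : Finset (Fin (p + r + 1)) := Finset.univ \ Finset.image c Finset.univ with hT
    have hTcard : T.card = p + 1 := by
      rw [hT, Finset.card_sdiff_of_subset (Finset.subset_univ _), Finset.card_univ, Fintype.card_fin,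
        Finset.card_image_of_injective _ hc, Finset.card_univ, Fintype.card_fin]
      omega
    set aiso := T.orderIsoOfFin hTcard with haiso
    set a : Fin (p + 1) → Fin (p + r + 1) := fun i => (aiso i : Fin (p + r + 1)) with ha
    have haInj : Function.Injective a := by
      intro x y h
      exact aiso.injective (Subtype.coe_injective h)
    have hamem : ∀ i, a i ∈ T := fun i => (aiso i).2
    have hac : ∀ i j, a i ≠ c j := by
      intro i j h
      have h2 := hamem i
      rw [hT, Finset.mem_sdiff] at h2
      exact h2.2 (Finset.mem_image.mpr ⟨j, Finset.mem_univ _, h.symm⟩)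
    have hamemsurj : ∀ x : Fin (p + r + 1), x ∈ T → ∃ i, a i = x := by
      intro x hx
      refine ⟨aiso.symm ⟨x, hx⟩, ?_⟩
      rw [ha]
      simp
    -- bijectivity of the arrangements
    have hbD : Function.Bijective (Dfun a c) := by
      rw [← Finite.injective_iff_bijective]
      intro x y h
      have h2 := addCases_injective a c haInj hc hac h
      exact Fin.ext (by simpa using congrArg Fin.val h2)
    have hsuccInj : ∀ j : Fin (p + 1),
        Function.Injective (fun i : Fin p => a (j.succAbove i)) := by
      intro j x y h
      exact Fin.succAbove_right_injective (haInj h)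
    have hconsInj : ∀ j : Fin (p + 1),
        Function.Injective (Fin.cons (a j) c : Fin (r + 1) → Fin (p + r + 1)) := by
      intro j x y h
      rcases Fin.eq_zero_or_eq_succ x with rfl | ⟨x', rfl⟩ <;>
        rcases Fin.eq_zero_or_eq_succ y with rfl | ⟨y', rfl⟩
      · rfl
      · rw [Fin.cons_zero, Fin.cons_succ] at h
        exact absurd h (hac j y')
      · rw [Fin.cons_succ, Fin.cons_zero] at h
        exact absurd h.symm (hac j x')
      · rw [Fin.cons_succ, Fin.cons_succ] at h
        rw [hc h]
    have hdisj : ∀ (j : Fin (p + 1)) (i : Fin p) (i' : Fin (r + 1)),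
        a (j.succAbove i) ≠ (Fin.cons (a j) c : Fin (r + 1) → Fin (p + r + 1)) i' := by
      intro j i i'
      rcases Fin.eq_zero_or_eq_succ i' with rfl | ⟨i'', rfl⟩
      · rw [Fin.cons_zero]
        intro h
        exact Fin.succAbove_ne j i (haInj h)
      · rw [Fin.cons_succ]
        exact hac _ i''
    have hbDj : ∀ j : Fin (p + 1), Function.Bijective (Djfun a c j) := by
      intro j
      rw [← Finite.injective_iff_bijective]
      exact addCases_injective _ _ (hsuccInj j) (hconsInj j) (hdisj j)
    -- permutation equivariance facts
    have hμτ : ∀ (u : Fin r → V) (θ : Equiv.Perm (Fin r)),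
        τ (u ∘ θ) = ((Equiv.Perm.sign θ : ℤ) : ℝ) * τ u := by
      intro u θ
      rw [AlternatingMap.map_perm]
      simp [Units.smul_def, zsmul_eq_mul]
    have hμstar : ∀ (u : Fin (r + 1) → V) (θ : Equiv.Perm (Fin (r + 1))),
        star1 α (u ∘ θ) = ((Equiv.Perm.sign θ : ℤ) : ℝ) * star1 α u := by
      intro u θ
      rw [AlternatingMap.map_perm]
      simp [Units.smul_def, zsmul_eq_mul]
    have hαperm : ∀ (u : Fin p → V) (θ : Equiv.Perm (Fin p)),
        α (u ∘ θ) = ((Equiv.Perm.sign θ : ℤ) : ℝ) * α u := by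
      intro u θ
      rw [AlternatingMap.map_perm]
      simp [Units.smul_def, zsmul_eq_mul]
    have hWperm : ∀ (u : Fin (p + 1) → V) (θ : Equiv.Perm (Fin (p + 1))),
        wedgeRaw ⇑α (fun z : Fin 1 → V => g v (z 0)) (u ∘ θ)
          = ((Equiv.Perm.sign θ : ℤ) : ℝ)
              * wedgeRaw ⇑α (fun z : Fin 1 → V => g v (z 0)) u := by
      intro u θ
      exact wedgeRaw_comp_perm _ _ u θ
    -- the value of τ on the basis tuple
    have hτval : τ (fun j => e (c j))
        = (∏ i, s (a i))
            * wedgeRaw ⇑α (fun z : Fin 1 → V => g v (z 0)) (fun i => e (a i))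
            * ((Equiv.Perm.sign (Equiv.ofBijective _ hbD) : ℤ) : ℝ) := by
      have happ := hτ (gammaA e a) (fun i0 => e (Dfun a c i0))
      have harg : (fun i : Fin (p + 1 + r) =>
            (fun i0 : Fin (p + r + 1) => e (Dfun a c i0)) (Fin.cast (by omega) i))
          = fun i : Fin ((p + 1) + r) =>
              e (Fin.addCases (motive := fun _ => Fin (p + r + 1)) a c i) := by
        funext i
        show e (Dfun a c (Fin.cast (by omega) i)) = _
        rw [Dfun]
        congr 1
      rw [harg, wedge_gammaA_eval e a c haInj hac ⇑τ hμτ,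
        innerNorm_gammaA e s a haInj _ hWperm] at happ
      have hεval : ε (fun i0 => e (Dfun a c i0))
          = ((Equiv.Perm.sign (Equiv.ofBijective _ hbD) : ℤ) : ℝ) := by
        have hform : (fun i0 => e (Dfun a c i0)) = ⇑e ∘ ⇑(Equiv.ofBijective _ hbD) := rfl
        rw [hform, hε, AlternatingMap.map_perm, Module.Basis.det_self]
        simp [Units.smul_def, zsmul_eq_mul]
      rw [hεval] at happ
      exact happ.trans (by ring)
    -- the values of star1 α on basis tuples
    have hstarval : ∀ j : Fin (p + 1),
        star1 α (fun i0 => e ((Fin.cons (a j) c : Fin (r + 1) → Fin (p + r + 1)) i0))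
          = (∏ i, s (a (j.succAbove i))) * α (fun i => e (a (j.succAbove i)))
              * ((Equiv.Perm.sign (Equiv.ofBijective _ (hbDj j)) : ℤ) : ℝ) := by
      intro j
      have happ := hstar1 (gammaA e (fun i => a (j.succAbove i))) α
        (fun i0 => e (Djfun a c j i0))
      have hform : (fun i0 : Fin (p + r + 1) => e (Djfun a c j i0))
          = fun i : Fin (p + (r + 1)) =>
              e (Fin.addCases (motive := fun _ => Fin (p + r + 1))
                (fun i => a (j.succAbove i)) (Fin.cons (a j) c) i) := rfl
      rw [hform, wedge_gammaA_eval e _ _ (hsuccInj j) (hdisj j) ⇑(star1 α) hμstar,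
        innerNorm_gammaA e s _ (hsuccInj j) _ hαperm] at happ
      have hεval : ε (fun i0 => e (Djfun a c j i0))
          = ((Equiv.Perm.sign (Equiv.ofBijective _ (hbDj j)) : ℤ) : ℝ) := by
        have hform2 : (fun i0 => e (Djfun a c j i0))
            = ⇑e ∘ ⇑(Equiv.ofBijective _ (hbDj j)) := rfl
        rw [hform2, hε, AlternatingMap.map_perm, Module.Basis.det_self]
        simp [Units.smul_def, zsmul_eq_mul]
      rw [hform] at hεval
      rw [hεval] at happ
      exact happ.trans (by ring)
    -- the coefficients
    have hG : ∀ j : Fin (p + 1), g v (e (a j)) = e.repr v (a j) * s (a j) := by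
      intro j
      conv_lhs => rw [← Module.Basis.sum_repr e v]
      rw [map_sum, LinearMap.sum_apply]
      rw [Finset.sum_eq_single (a j)]
      · rw [LinearMap.map_smul, LinearMap.smul_apply, horth, if_pos rfl, smul_eq_mul]
      · intro b _ hb
        rw [LinearMap.map_smul, LinearMap.smul_apply, horth, if_neg hb, smul_zero]
      · intro hmem
        exact absurd (Finset.mem_univ _) hmem
    have hrepr : ∀ j : Fin (p + 1), e.repr v (a j) = g v (e (a j)) * s (a j) := by
      intro j
      rcases hs (a j) with h | h <;> rw [hG j, h] <;> ring
    -- expand the left-hand side over the basis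
    set ec : Fin r → V := fun j => e (c j) with hec
    have hLHS : star1 α (Fin.cons v ec)
        = ∑ i : Fin (p + r + 1), e.repr v i • star1 α (Fin.cons (e i) ec) := by
      have h1 : star1 α (Function.update (Fin.cons v ec) 0 (∑ i, e.repr v i • e i))
          = star1 α (Fin.cons v ec) := by
        rw [Module.Basis.sum_repr, Fin.update_cons_zero]
      rw [← h1, AlternatingMap.map_update_sum]
      apply Finset.sum_congr rfl
      intro i _
      rw [AlternatingMap.map_update_smul, Fin.update_cons_zero]
    have hzero : ∀ i : Fin (p + r + 1), i ∈ Finset.univ → i ∉ T →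
        e.repr v i • star1 α (Fin.cons (e i) ec) = 0 := by
      intro i _ hiT
      rw [hT, Finset.mem_sdiff] at hiT
      push_neg at hiT
      obtain ⟨j0, _, hj0⟩ := Finset.mem_image.mp (hiT (Finset.mem_univ _))
      have : star1 α (Fin.cons (e i) ec) = 0 := by
        apply AlternatingMap.map_eq_zero_of_eq _ _ (i := 0) (j := Fin.succ j0)
        · simp only [Fin.cons_zero, Fin.cons_succ, hec]
          rw [hj0]
        · exact (Fin.succ_ne_zero j0).symm
      rw [this, smul_zero]
    have hLHS2 : star1 α (Fin.cons v ec)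
        = ∑ j : Fin (p + 1), e.repr v (a j) • star1 α (Fin.cons (e (a j)) ec) := by
      rw [hLHS, ← Finset.sum_subset (Finset.subset_univ T) (fun x h1 h2 => hzero x h1 h2)]
      exact (Finset.sum_bij (fun (j : Fin (p + 1)) (_ : j ∈ Finset.univ) => a j)
        (fun j _ => hamem j) (fun x _ y _ h => haInj h)
        (fun x hx => by
          obtain ⟨i, hi⟩ := hamemsurj x hx
          exact ⟨i, Finset.mem_univ _, hi⟩)
        (fun j _ => rfl)).symm
    have hconsform : ∀ j : Fin (p + 1),
        (Fin.cons (e (a j)) ec : Fin (r + 1) → V)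
          = fun i0 => e ((Fin.cons (a j) c : Fin (r + 1) → Fin (p + r + 1)) i0) := by
      intro j
      funext i0
      rcases Fin.eq_zero_or_eq_succ i0 with rfl | ⟨i', rfl⟩
      · rw [Fin.cons_zero, Fin.cons_zero]
      · rw [Fin.cons_succ, Fin.cons_succ, hec]
    -- put everything together
    rw [hLHS2, hτval, wedgeRaw_one_form α (fun z : Fin 1 → V => g v (z 0)) (fun i => e (a i))]
    rw [Finset.mul_sum, Finset.sum_mul]
    apply Finset.sum_congr rfl
    intro j _
    rw [hconsform j, hstarval j,
      sign_Dj a c j hbD (hbDj j), hrepr j, smul_eq_mul]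
    have hprodsplit : (∏ i, s (a i))
        = s (a j) * ∏ i : Fin p, s (a (j.succAbove i)) :=
      Fin.prod_univ_succAbove (fun i => s (a i)) j
    rw [hprodsplit]
    rcases hs (a j) with h | h <;> rw [h] <;> ring
  -- conclude via uniqueness of alternating maps on basis vectors
  have hcurry : (star1 α).curryLeft v = τ := by
    apply Module.Basis.ext_alternating e
    intro c hc
    exact main c hc
  intro w
  have h2 : ((star1 α).curryLeft v) w = τ w := by rw [hcurry]
  exact h2


end
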